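/- Let n ≥ 2 be an integer and 0 < p < 1/2. Let W have the binomial distribution Bin(n, p), and set α = n(n−1)p(1−p) and γ = (n−1)(1−2p). Let π be the ℕ-valued random variable with P(π = j) = c·α^j/(j!·∏_{k=1}^j (γ + k − 1)) for j ≥ 0, where c > 0 is the normalizing constant. Then d_TV(L(W), L(π)) ≤ 2p². -/

import Mathlib

set_option maxHeartbeats 1000000

open MeasureTheory ProbabilityTheory

namespace Stmt7Aux

noncomputable def bin (p : ℝ) (m k : ℕ) : ℝ := (m.choose k : ℝ) * p^k * (1-p)^(m-k)

lemma bin_nonneg {p : ℝ} (hp0 : 0 ≤ p) (hp1 : p ≤ 1) (m k : ℕ) : 0 ≤ bin p m k := by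
  unfold bin
  have : (0:ℝ) ≤ 1 - p := by linarith
  positivity

lemma bin_zero_of_lt {p : ℝ} {m k : ℕ} (h : m < k) : bin p m k = 0 := by
  unfold bin
  rw [Nat.choose_eq_zero_of_lt h]
  simp

lemma bin_pascal {p : ℝ} (m k : ℕ) :
    bin p (m+1) (k+1) = (1-p) * bin p m (k+1) + p * bin p m k := by
  rcases lt_trichotomy k m with h | h | h
  · unfold bin
    rw [Nat.choose_succ_succ]
    have h1 : m + 1 - (k+1) = (m - (k+1)) + 1 := by omega
    have h2 : m - k = (m - (k+1)) + 1 := by omega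
    rw [h1, h2]
    push_cast
    ring
  · subst h
    unfold bin
    rw [Nat.choose_succ_succ, Nat.choose_eq_zero_of_lt (Nat.lt_succ_self k)]
    have h1 : k + 1 - (k+1) = 0 := by omega
    have h2 : k - k = 0 := by omega
    rw [h1, h2]
    push_cast
    simp [Nat.choose_self]
    ring
  · rw [bin_zero_of_lt (by omega), bin_zero_of_lt (by omega), bin_zero_of_lt (by omega)]
    ring

lemma bin_pascal_zero {p : ℝ} (m : ℕ) : bin p (m+1) 0 = (1-p) * bin p m 0 := by
  unfold bin
  simp [pow_succ]
  ring

lemma bin_fact {p : ℝ} (m k : ℕ) :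
    ((k:ℝ)+1) * bin p (m+1) (k+1) = ((m:ℝ)+1) * p * bin p m k := by
  unfold bin
  have h : (m+1) * m.choose k = (m+1).choose (k+1) * (k+1) := by
    rw [← Nat.add_one_mul_choose_eq]
  have h1 : m + 1 - (k+1) = m - k := by omega
  rw [h1]
  have hc := congrArg (fun x : ℕ => (x : ℝ)) h
  push_cast at hc
  linear_combination (p^(k+1) * (1-p)^(m-k)) * hc.symm

lemma bin_total {p : ℝ} (m : ℕ) : ∑ k ∈ Finset.range (m+1), bin p m k = 1 := by
  rw [show ((1:ℝ)) = (p + (1-p))^m by rw [show p + (1-p) = (1:ℝ) by ring, one_pow]]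
  rw [add_pow]
  apply Finset.sum_congr rfl
  intro k hk
  unfold bin
  ring

lemma bin_total' {p : ℝ} (m M : ℕ) (h : m + 1 ≤ M) :
    ∑ k ∈ Finset.range M, bin p m k = 1 := by
  rw [← bin_total (p := p) m]
  symm
  apply Finset.sum_subset
  · exact Finset.range_subset_range.2 h
  · intro k _ hk
    exact bin_zero_of_lt (by simp at hk ⊢; omega)

lemma abel (ν g : ℕ → ℝ) (m : ℕ) :
    ∑ j ∈ Finset.range (m+1), ν j * g (j+1)
      = (∑ k ∈ Finset.range m,
          (∑ i ∈ Finset.range (k+1), ν i) * (g (k+1) - g (k+2)))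
        + (∑ i ∈ Finset.range (m+1), ν i) * g (m+1) := by
  induction m with
  | zero => simp
  | succ m ih =>
    rw [Finset.sum_range_succ (f := fun j => ν j * g (j+1)), ih,
      Finset.sum_range_succ (f := fun k => (∑ i ∈ Finset.range (k+1), ν i) * (g (k+1) - g (k+2))),
      Finset.sum_range_succ (f := fun i => ν i) (n := m+1)]
    ring


noncomputable def Beta (γ : ℝ) (j : ℕ) : ℝ := (j:ℝ) * (γ + (j:ℝ) - 1)

noncomputable def nuf (p α γ : ℝ) (n j : ℕ) : ℝ :=
  α * bin p n j - Beta γ (j+1) * bin p n (j+1)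

section nu
variable {p α γ : ℝ} {m : ℕ}
  (hα : α = ((m:ℝ)+2)*((m:ℝ)+1)*p*(1-p)) (hγ : γ = ((m:ℝ)+1)*(1-2*p))

include hα hγ

lemma nu_zero : nuf p α γ (m+2) 0 = α * p^2 * bin p m 0 := by
  subst hα hγ
  have E1 := bin_fact (p := p) (m+1) 0
  have E2 := bin_pascal_zero (p := p) (m+1)
  have E4 := bin_pascal_zero (p := p) m
  unfold nuf Beta
  push_cast at E1 ⊢
  linear_combination (-(((m:ℝ)+1)*(1-2*p))) * E1
    + (((m:ℝ)+2)*((m:ℝ)+1)*p*(1-p)) * E2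
    + (((m:ℝ)+2)*((m:ℝ)+1)*p^3) * E4

lemma nu_one : nuf p α γ (m+2) 1 = α * p^2 * (bin p m 1 - 2 * bin p m 0) := by
  subst hα hγ
  have E1 := bin_fact (p := p) (m+1) 1
  have E2 := bin_pascal (p := p) (m+1) 0
  have E5 := bin_fact (p := p) m 0
  have E3 := bin_pascal (p := p) m 0
  have E4 := bin_pascal_zero (p := p) m
  unfold nuf Beta
  push_cast at E1 E5 ⊢
  linear_combination (-(((m:ℝ)+1)*(1-2*p)+1)) * E1
    + (((m:ℝ)+2)*((m:ℝ)+1)*p*(1-p)) * E2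
    + (-(((m:ℝ)+2)*p)) * E5
    + (((m:ℝ)+2)*((m:ℝ)+1)*p^3) * E3
    + (((m:ℝ)+2)*((m:ℝ)+1)*p^2*(1-p)) * E4

lemma nu_two (j : ℕ) :
    nuf p α γ (m+2) (j+2)
      = α * p^2 * (bin p m (j+2) - 2 * bin p m (j+1) + bin p m j) := by
  subst hα hγ
  have E1 := bin_fact (p := p) (m+1) (j+2)
  have E2 := bin_pascal (p := p) (m+1) (j+1)
  have E5 := bin_fact (p := p) m (j+1)
  have E3 := bin_pascal (p := p) m (j+1)
  have E4 := bin_pascal (p := p) m j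
  unfold nuf Beta
  push_cast at E1 E5 ⊢
  linear_combination (-(((m:ℝ)+1)*(1-2*p)+(j:ℝ)+2)) * E1
    + (((m:ℝ)+2)*((m:ℝ)+1)*p*(1-p)) * E2
    + (-(((m:ℝ)+2)*p)) * E5
    + (((m:ℝ)+2)*((m:ℝ)+1)*p^3) * E3
    + (((m:ℝ)+2)*((m:ℝ)+1)*p^2*(1-p)) * E4

noncomputable def Vf (p α γ : ℝ) (n k : ℕ) : ℝ :=
  ∑ i ∈ Finset.range (k+1), nuf p α γ n i

lemma V_zero : Vf p α γ (m+2) 0 = α * p^2 * bin p m 0 := by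
  unfold Vf
  simpa using nu_zero hα hγ

lemma V_succ (k : ℕ) :
    Vf p α γ (m+2) (k+1) = α * p^2 * (bin p m (k+1) - bin p m k) := by
  induction k with
  | zero =>
    unfold Vf
    rw [Finset.sum_range_succ]
    have h0 := V_zero hα hγ
    unfold Vf at h0
    rw [h0, nu_one hα hγ]
    ring
  | succ k ih =>
    unfold Vf
    rw [Finset.sum_range_succ]
    unfold Vf at ih
    rw [ih, nu_two hα hγ k]
    ring

lemma V_total : Vf p α γ (m+2) (m+2) = 0 := by
  rw [V_succ hα hγ (m+1), bin_zero_of_lt (by omega), bin_zero_of_lt (by omega)]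
  ring

lemma V_abs_sum (hp0 : 0 ≤ p) (hp1 : p ≤ 1) (hα0 : 0 ≤ α) :
    ∑ k ∈ Finset.range (m+2), |Vf p α γ (m+2) k| ≤ 2 * α * p^2 := by
  have hw := fun k => bin_nonneg (p := p) hp0 hp1 m k
  have key : ∀ k, |Vf p α γ (m+2) k| ≤
      α * p^2 * (bin p m k + (if k = 0 then 0 else bin p m (k-1))) := by
    intro k
    cases k with
    | zero =>
      rw [V_zero hα hγ]
      have hap : 0 ≤ α * p^2 := mul_nonneg hα0 (sq_nonneg p)
      rw [abs_of_nonneg (mul_nonneg hap (hw 0))]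
      simp
    | succ k =>
      rw [V_succ hα hγ k]
      simp only [Nat.succ_ne_zero, if_neg, Nat.add_sub_cancel]
      have h1 : |bin p m (k+1) - bin p m k| ≤ bin p m (k+1) + bin p m k := by
        rw [abs_sub_le_iff]
        constructor <;> nlinarith [hw k, hw (k+1)]
      calc |α * p^2 * (bin p m (k+1) - bin p m k)|
          = α * p^2 * |bin p m (k+1) - bin p m k| := by
            rw [abs_mul, abs_of_nonneg (mul_nonneg hα0 (sq_nonneg p))]
        _ ≤ α * p^2 * (bin p m (k+1) + bin p m k) := by
            exact mul_le_mul_of_nonneg_left h1 (mul_nonneg hα0 (sq_nonneg p))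
  calc ∑ k ∈ Finset.range (m+2), |Vf p α γ (m+2) k|
      ≤ ∑ k ∈ Finset.range (m+2),
          (α * p^2 * (bin p m k + (if k = 0 then 0 else bin p m (k-1)))) :=
        Finset.sum_le_sum (fun k _ => key k)
    _ = α * p^2 * (∑ k ∈ Finset.range (m+2), bin p m k)
          + α * p^2 * (∑ k ∈ Finset.range (m+2), (if k = 0 then 0 else bin p m (k-1))) := by
        rw [Finset.mul_sum, Finset.mul_sum, ← Finset.sum_add_distrib]
        apply Finset.sum_congr rfl
        intro k _
        ring
    _ ≤ 2 * α * p^2 := by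
        rw [bin_total' m (m+2) (by omega)]
        have : ∑ k ∈ Finset.range (m+2), (if k = 0 then (0:ℝ) else bin p m (k-1))
            = ∑ k ∈ Finset.range (m+1), bin p m k := by
          rw [Finset.sum_range_succ' (f := fun k => if k = 0 then (0:ℝ) else bin p m (k-1))]
          simp
        rw [this, bin_total m]
        nlinarith [sq_nonneg p]


end nu

section SteinQ
variable {α γ : ℝ} {q : ℕ → ℝ}

noncomputable def Ff (q : ℕ → ℝ) (j : ℕ) : ℝ := ∑ l ∈ Finset.range (j+1), q l
noncomputable def Tf (q : ℕ → ℝ) (j : ℕ) : ℝ := ∑' i, q (i+(j+1))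

lemma Beta_pos (hγ : 0 < γ) (j : ℕ) : 0 < Beta γ (j+1) := by
  unfold Beta
  push_cast
  have : (0:ℝ) ≤ j := Nat.cast_nonneg j
  nlinarith

lemma Beta_mono (hγ : 0 < γ) {j k : ℕ} (h : j ≤ k) : Beta γ (j+1) ≤ Beta γ (k+1) := by
  unfold Beta
  have : (j:ℝ) ≤ k := Nat.cast_le.2 h
  have h0 : (0:ℝ) ≤ j := Nat.cast_nonneg j
  push_cast
  nlinarith

lemma Ff_succ (j : ℕ) : Ff q (j+1) = Ff q j + q (j+1) := Finset.sum_range_succ _ _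

lemma Ff_pos (hq : ∀ j, 0 < q j) (j : ℕ) : 0 < Ff q j := by
  unfold Ff
  exact Finset.sum_pos (fun l _ => hq l) (by simp)

lemma Tf_succ (hsum : Summable q) (j : ℕ) : Tf q j = q (j+1) + Tf q (j+1) := by
  unfold Tf
  rw [Summable.tsum_eq_zero_add ((summable_nat_add_iff (j+1)).2 hsum)]
  congr 1
  · norm_num
  · apply tsum_congr
    intro i
    congr 1
    omega

lemma Tf_nonneg (hq : ∀ j, 0 < q j) (j : ℕ) : 0 ≤ Tf q j :=
  tsum_nonneg (fun i => (hq _).le)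

lemma Ff_add_Tf (hsum : Summable q) (htot : ∑' j, q j = 1) (j : ℕ) :
    Ff q j + Tf q j = 1 := by
  rw [← htot]
  exact hsum.sum_add_tsum_nat_add (j+1)

variable (hα : 0 < α) (hγ : 0 < γ) (hq : ∀ j, 0 < q j) (hsum : Summable q)
  (htot : ∑' j, q j = 1) (hbal : ∀ j, α * q j = Beta γ (j+1) * q (j+1))

include hα hγ hq hbal in
lemma F_ineq : ∀ j, Ff q j * (α - Beta γ (j+1)) ≤ α * q j := by
  intro j
  induction j with
  | zero =>
    have h0 : Ff q 0 = q 0 := by unfold Ff; simp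
    rw [h0]
    have : Beta γ 1 = γ := by unfold Beta; push_cast; ring
    rw [this]
    nlinarith [hq 0]
  | succ j ih =>
    have hB1 : 0 < Beta γ (j+1) := Beta_pos hγ j
    have hB2 : Beta γ (j+1) ≤ Beta γ (j+2) := Beta_mono hγ (by omega)
    have hb := hbal j
    rw [Ff_succ]
    rcases le_or_gt α (Beta γ (j+2)) with h | h
    · have h1 : (Ff q j + q (j+1)) * (α - Beta γ (j+2)) ≤ 0 := by
        apply mul_nonpos_of_nonneg_of_nonpos
        · have := Ff_pos hq j
          nlinarith [hq (j+1)]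
        · linarith
      nlinarith [hq (j+1)]
    · have hlt : Beta γ (j+1) < α := lt_of_le_of_lt hB2 h
      have hF : 0 < Ff q j := Ff_pos hq j
      nlinarith [hq (j+1), hq j, mul_pos hF (sub_pos.2 hlt),
        mul_le_mul_of_nonneg_right ih (le_of_lt (sub_pos.2 h))]

include hα hγ hq hbal in
lemma x_mono (j : ℕ) : Ff q j * q (j+1) ≤ Ff q (j+1) * q j := by
  have h := F_ineq hα hγ hq hbal j
  have hb := hbal j
  have hF := Ff_pos hq j
  have h1 : Ff q j * (α - Beta γ (j+1)) * q (j+1) ≤ α * q j * q (j+1) :=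
    mul_le_mul_of_nonneg_right h (hq (j+1)).le
  have h2 : Ff q j * (α * q j) = Ff q j * (Beta γ (j+1) * q (j+1)) := by rw [hb]
  have key : α * (Ff q j * q (j+1)) ≤ α * (Ff q (j+1) * q j) := by
    rw [Ff_succ]
    nlinarith [h1, h2]
  exact le_of_mul_le_mul_left key hα

include hα hγ hq hsum hbal in
lemma T_ineq : ∀ j, Tf q j * (Beta γ (j+1) - α) ≤ α * q j := by
  intro j
  rcases le_or_gt (Beta γ (j+1)) α with h | h
  · have hT := Tf_nonneg hq j
    have h1 : Tf q j * (Beta γ (j+1) - α) ≤ 0 :=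
      mul_nonpos_of_nonneg_of_nonpos hT (by linarith)
    nlinarith [mul_pos hα (hq j)]
  · set β := Beta γ (j+1) with hβ
    have hβ0 : 0 < β := Beta_pos hγ j
    set r := α / β with hr
    have hr0 : 0 < r := div_pos hα hβ0
    have hr1 : r < 1 := (div_lt_one hβ0).2 h
    have qbound : ∀ i, q (i+(j+1)) ≤ q j * r^(i+1) := by
      intro i
      induction i with
      | zero =>
        simp only [zero_add, pow_one]
        have hb := hbal j
        have heq : q (j+1) = q j * r := by
          rw [hr]
          field_simp
          linarith
        rw [heq]
      | succ i ih =>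
        have hb := hbal (i+(j+1))
        have hble : β ≤ Beta γ (i+(j+1)+1) := Beta_mono hγ (by omega)
        have hBpos : 0 < Beta γ (i+(j+1)+1) := Beta_pos hγ _
        have hq1 : q (i+(j+1)+1) = α * q (i+(j+1)) / Beta γ (i+(j+1)+1) := by
          field_simp
          linarith
        have step : q (i+(j+1)+1) ≤ r * q (i+(j+1)) := by
          have hrw : r * q (i+(j+1)) = α * q (i+(j+1)) / β := by rw [hr]; ring
          rw [hq1, hrw, div_le_div_iff₀ hBpos hβ0]
          nlinarith [mul_nonneg (mul_nonneg hα.le (hq (i+(j+1))).le) (sub_nonneg.2 hble)]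
        have hidx : q (i+1+(j+1)) = q (i+(j+1)+1) := by congr 1; omega
        rw [hidx]
        calc q (i+(j+1)+1) ≤ r * q (i+(j+1)) := step
          _ ≤ r * (q j * r^(i+1)) := mul_le_mul_of_nonneg_left ih hr0.le
          _ = q j * r^(i+1+1) := by ring
    have hgeo : Summable (fun i : ℕ => q j * r^(i+1)) := by
      have h1 : Summable (fun i : ℕ => r^(i+1)) :=
        (summable_nat_add_iff 1).2 (summable_geometric_of_lt_one hr0.le hr1)
      exact h1.mul_left _
    have hT : Tf q j ≤ q j * (r / (1-r)) := by
      unfold Tf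
      have h1 : ∑' i, q (i+(j+1)) ≤ ∑' i : ℕ, q j * r^(i+1) :=
        Summable.tsum_le_tsum qbound ((summable_nat_add_iff (j+1)).2 hsum) hgeo
      have h2 : ∑' i : ℕ, q j * r^(i+1) = (q j * r) * ∑' i : ℕ, r^i := by
        rw [← tsum_mul_left]
        apply tsum_congr
        intro i
        ring
      rw [h2, tsum_geometric_of_lt_one hr0.le hr1] at h1
      apply le_trans h1
      apply le_of_eq
      rw [div_eq_mul_inv]
      ring
    have hfin : q j * (r/(1-r)) * (β - α) = α * q j := by
      have hne : β - α ≠ 0 := ne_of_gt (by linarith)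
      have h1 : 1 - r = (β - α)/β := by rw [hr]; field_simp
      rw [hr, h1]
      field_simp
    calc Tf q j * (β - α) ≤ q j * (r/(1-r)) * (β - α) :=
          mul_le_mul_of_nonneg_right hT (by linarith)
      _ = α * q j := hfin

include hα hγ hq hsum hbal in
lemma y_mono (j : ℕ) : Tf q (j+1) * q j ≤ Tf q j * q (j+1) := by
  have h := T_ineq hα hγ hq hsum hbal (j+1)
  have hb := hbal j
  have hB2 : Beta γ (j+1) ≤ Beta γ (j+2) := Beta_mono hγ (by omega)
  have hTn : 0 ≤ Tf q (j+1) := Tf_nonneg hq (j+1)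
  have hTs : Tf q j = q (j+1) + Tf q (j+1) := Tf_succ hsum j
  rw [hTs]
  have h1 : Tf q (j+1) * (Beta γ (j+1) - α) ≤ α * q (j+1) := by
    nlinarith [mul_le_mul_of_nonneg_left hB2 hTn]
  have key : α * (Tf q (j+1) * q j) ≤ α * ((q (j+1) + Tf q (j+1)) * q (j+1)) := by
    nlinarith [hq j, hq (j+1), mul_le_mul_of_nonneg_right h1 (hq (j+1)).le,
      mul_pos (hq j) (hq (j+1)),
      mul_le_mul_of_nonneg_left hb.le hTn, mul_le_mul_of_nonneg_left hb.ge hTn]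
  exact le_of_mul_le_mul_left key hα

end SteinQ

section G
variable {α γ : ℝ} {q χ : ℕ → ℝ}

noncomputable def af (χ q : ℕ → ℝ) (j : ℕ) : ℝ := ∑ l ∈ Finset.range (j+1), χ l * q l
noncomputable def bf (χ q : ℕ → ℝ) (j : ℕ) : ℝ := ∑' i, χ (i+(j+1)) * q (i+(j+1))
noncomputable def QAf (χ q : ℕ → ℝ) : ℝ := ∑' j, χ j * q j
noncomputable def gf (α : ℝ) (χ q : ℕ → ℝ) : ℕ → ℝ
  | 0 => 0
  | (j+1) => (af χ q j - QAf χ q * Ff q j) / (α * q j)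

variable (hα : 0 < α) (hγ : 0 < γ) (hq : ∀ j, 0 < q j) (hsum : Summable q)
  (htot : ∑' j, q j = 1) (hbal : ∀ j, α * q j = Beta γ (j+1) * q (j+1))
  (hχ : ∀ j, χ j = 0 ∨ χ j = 1)

include hχ in
lemma chi_nonneg (j : ℕ) : 0 ≤ χ j := by rcases hχ j with h | h <;> rw [h] <;> norm_num

include hχ in
lemma chi_le_one (j : ℕ) : χ j ≤ 1 := by rcases hχ j with h | h <;> rw [h] <;> norm_num

include hχ hq hsum in
lemma chiq_summable : Summable (fun j => χ j * q j) := by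
  apply Summable.of_nonneg_of_le
    (fun j => mul_nonneg (chi_nonneg hχ j) (hq j).le)
    (fun j => by nlinarith [chi_le_one hχ j, hq j, chi_nonneg hχ j])
    hsum

include hχ hq hsum in
lemma QA_split (j : ℕ) : af χ q j + bf χ q j = QAf χ q :=
  (chiq_summable hq hsum hχ).sum_add_tsum_nat_add (j+1)

include hχ hq in
lemma af_nonneg (j : ℕ) : 0 ≤ af χ q j :=
  Finset.sum_nonneg (fun l _ => mul_nonneg (chi_nonneg hχ l) (hq l).le)

include hχ hq in
lemma af_le (j : ℕ) : af χ q j ≤ Ff q j :=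
  Finset.sum_le_sum (fun l _ => by nlinarith [chi_le_one hχ l, hq l, chi_nonneg hχ l])

include hχ hq in
lemma bf_nonneg (j : ℕ) : 0 ≤ bf χ q j :=
  tsum_nonneg (fun i => mul_nonneg (chi_nonneg hχ _) (hq _).le)

include hχ hq hsum in
lemma bf_le (j : ℕ) : bf χ q j ≤ Tf q j := by
  have h1 : Summable (fun i => χ (i+(j+1)) * q (i+(j+1))) :=
    (summable_nat_add_iff (j+1)).2 (chiq_summable hq hsum hχ)
  have h2 : Summable (fun i => q (i+(j+1))) := (summable_nat_add_iff (j+1)).2 hsum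
  have hle : ∀ i, χ (i+(j+1)) * q (i+(j+1)) ≤ q (i+(j+1)) := by
    intro i
    nlinarith [chi_le_one hχ (i+(j+1)), hq (i+(j+1)), chi_nonneg hχ (i+(j+1))]
  exact Summable.tsum_le_tsum hle h1 h2

lemma af_succ (j : ℕ) : af χ q (j+1) = af χ q j + χ (j+1) * q (j+1) :=
  Finset.sum_range_succ _ _

include hα hq hbal in
lemma stein_eq (j : ℕ) :
    α * gf α χ q (j+1) - Beta γ j * gf α χ q j = χ j - QAf χ q := by
  cases j with
  | zero =>
    show α * ((af χ q 0 - QAf χ q * Ff q 0) / (α * q 0)) - Beta γ 0 * 0 = χ 0 - QAf χ q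
    have hB0 : Beta γ 0 = 0 := by unfold Beta; push_cast; ring
    have ha0 : af χ q 0 = χ 0 * q 0 := by unfold af; simp
    have hF0 : Ff q 0 = q 0 := by unfold Ff; simp
    rw [hB0, ha0, hF0]
    field_simp [(hq 0).ne', hα.ne']
    ring
  | succ j =>
    show α * ((af χ q (j+1) - QAf χ q * Ff q (j+1)) / (α * q (j+1)))
        - Beta γ (j+1) * ((af χ q j - QAf χ q * Ff q j) / (α * q j))
        = χ (j+1) - QAf χ q
    have hb := hbal j
    have hBpos : Beta γ (j+1) * q (j+1) = α * q j := hb.symm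
    rw [af_succ, Ff_succ]
    have hqj := (hq j).ne'
    have hqj1 := (hq (j+1)).ne'
    field_simp
    linear_combination (af χ q j - QAf χ q * Ff q j) * hb

include hα hγ hq hsum htot hbal hχ in
lemma gdiff_bound (j : ℕ) : |gf α χ q (j+2) - gf α χ q (j+1)| ≤ 1/α := by
  have hqj := hq j
  have hqj1 := hq (j+1)
  set A := af χ q j with hA
  set B := bf χ q j with hB
  set Q := QAf χ q with hQdef
  set e := χ (j+1) with he
  have hQ : Q = A + B := (QA_split hq hsum hχ j).symm
  have hFT : Ff q j + Tf q j = 1 := Ff_add_Tf hsum htot j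
  have hT : Tf q j = 1 - Ff q j := by linarith
  have hTs : Tf q j = q (j+1) + Tf q (j+1) := Tf_succ hsum j
  have hT' : Tf q (j+1) = 1 - Ff q j - q (j+1) := by linarith
  have hFs : Ff q (j+1) = Ff q j + q (j+1) := Ff_succ j
  have has : af χ q (j+1) = A + e * q (j+1) := af_succ j
  set N := (af χ q (j+1) - Q * Ff q (j+1)) * q j - (A - Q * Ff q j) * q (j+1) with hN
  have ID : N = e * (q j * q (j+1))
      - (A * (Tf q j * q (j+1) - Tf q (j+1) * q j)
         + B * (Ff q (j+1) * q j - Ff q j * q (j+1))) := by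
    rw [hN, has, hFs, hQ, hT, hT']
    ring
  have ID2 : Ff q j * (Tf q j * q (j+1) - Tf q (j+1) * q j)
      + Tf q j * (Ff q (j+1) * q j - Ff q j * q (j+1)) = q j * q (j+1) := by
    rw [hFs, hT, hT']
    ring
  have hf1 : 0 ≤ Tf q j * q (j+1) - Tf q (j+1) * q j :=
    sub_nonneg.2 (y_mono hα hγ hq hsum hbal j)
  have hf2 : 0 ≤ Ff q (j+1) * q j - Ff q j * q (j+1) :=
    sub_nonneg.2 (x_mono hα hγ hq hbal j)
  have hA0 : 0 ≤ A := af_nonneg hq hχ j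
  have hAF : A ≤ Ff q j := af_le hq hχ j
  have hB0 : 0 ≤ B := bf_nonneg hq hχ j
  have hBT : B ≤ Tf q j := bf_le hq hsum hχ j
  have hbr0 : 0 ≤ A * (Tf q j * q (j+1) - Tf q (j+1) * q j)
      + B * (Ff q (j+1) * q j - Ff q j * q (j+1)) := by
    have := mul_nonneg hA0 hf1
    have := mul_nonneg hB0 hf2
    linarith
  have hbr1 : A * (Tf q j * q (j+1) - Tf q (j+1) * q j)
      + B * (Ff q (j+1) * q j - Ff q j * q (j+1)) ≤ q j * q (j+1) := by
    rw [← ID2]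
    have h1 := mul_le_mul_of_nonneg_right hAF hf1
    have h2 := mul_le_mul_of_nonneg_right hBT hf2
    linarith
  have hNbound : |N| ≤ q j * q (j+1) := by
    rw [abs_le]
    rcases hχ (j+1) with h | h
    · have h' : e = 0 := he.trans h
      rw [ID, h']
      constructor <;> nlinarith [mul_pos hqj hqj1]
    · have h' : e = 1 := he.trans h
      rw [ID, h']
      constructor <;> nlinarith [mul_pos hqj hqj1]
  have hgd : gf α χ q (j+2) - gf α χ q (j+1) = N / (α * (q j * q (j+1))) := by
    show (af χ q (j+1) - QAf χ q * Ff q (j+1)) / (α * q (j+1))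
        - (af χ q j - QAf χ q * Ff q j) / (α * q j) = _
    rw [hN]
    field_simp
    ring
  rw [hgd, abs_div, abs_of_pos (by positivity : (0:ℝ) < α * (q j * q (j+1)))]
  rw [div_le_div_iff₀ (by positivity) hα]
  calc |N| * α ≤ (q j * q (j+1)) * α := mul_le_mul_of_nonneg_right hNbound hα.le
    _ = 1 * (α * (q j * q (j+1))) := by ring

end G

lemma core (m : ℕ) (p α γ : ℝ) (hp0 : 0 < p) (hp1 : p < 1/2)
    (hαv : α = ((m:ℝ)+2)*((m:ℝ)+1)*p*(1-p)) (hγv : γ = ((m:ℝ)+1)*(1-2*p))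
    (q χ : ℕ → ℝ) (hq : ∀ j, 0 < q j) (hsum : Summable q) (htot : ∑' j, q j = 1)
    (hbal : ∀ j, α * q j = Beta γ (j+1) * q (j+1))
    (hχ : ∀ j, χ j = 0 ∨ χ j = 1) :
    |(∑ j ∈ Finset.range (m+3), χ j * bin p (m+2) j) - QAf χ q| ≤ 2*p^2 := by
  have h1p : 0 < 1 - p := by linarith
  have hα : 0 < α := by
    rw [hαv]
    have : (0:ℝ) < (m:ℝ)+2 := by positivity
    have : (0:ℝ) < (m:ℝ)+1 := by positivity
    positivity
  have hγ0 : 0 < γ := by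
    rw [hγv]
    have : (0:ℝ) < (m:ℝ)+1 := by positivity
    nlinarith
  set g := gf α χ q with hg
  set QA := QAf χ q with hQA
  -- Step A
  have hA : ∑ j ∈ Finset.range (m+3), bin p (m+2) j * (χ j - QA)
      = (∑ j ∈ Finset.range (m+3), χ j * bin p (m+2) j) - QA := by
    calc ∑ j ∈ Finset.range (m+3), bin p (m+2) j * (χ j - QA)
        = ∑ j ∈ Finset.range (m+3), (χ j * bin p (m+2) j - QA * bin p (m+2) j) :=
          Finset.sum_congr rfl (fun j _ => by ring)
      _ = (∑ j ∈ Finset.range (m+3), χ j * bin p (m+2) j)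
            - QA * ∑ j ∈ Finset.range (m+3), bin p (m+2) j := by
          rw [Finset.sum_sub_distrib, Finset.mul_sum]
      _ = (∑ j ∈ Finset.range (m+3), χ j * bin p (m+2) j) - QA := by
          rw [bin_total' (m+2) (m+3) (by omega)]
          ring
  -- Step B : use the Stein equation termwise
  have hB : ∑ j ∈ Finset.range (m+3), bin p (m+2) j * (χ j - QA)
      = ∑ j ∈ Finset.range (m+3), bin p (m+2) j * (α * g (j+1) - Beta γ j * g j) :=
    Finset.sum_congr rfl (fun j _ => by rw [stein_eq hα hq hbal j])
  -- Step C : reindex to get the nu form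
  have hswap : ∑ j ∈ Finset.range (m+3), Beta γ j * bin p (m+2) j * g j
      = ∑ j ∈ Finset.range (m+3), Beta γ (j+1) * bin p (m+2) (j+1) * g (j+1) := by
    have left := Finset.sum_range_succ' (fun j => Beta γ j * bin p (m+2) j * g j) (m+2)
    have right := Finset.sum_range_succ (fun j => Beta γ (j+1) * bin p (m+2) (j+1) * g (j+1)) (m+2)
    have hg0 : g 0 = 0 := rfl
    have hlast : bin p (m+2) (m+2+1) = 0 := bin_zero_of_lt (by omega)
    rw [left, right, hg0, hlast]
    simp
  have hC : ∑ j ∈ Finset.range (m+3), bin p (m+2) j * (α * g (j+1) - Beta γ j * g j)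
      = ∑ j ∈ Finset.range (m+3), nuf p α γ (m+2) j * g (j+1) := by
    have e1 : ∑ j ∈ Finset.range (m+3), bin p (m+2) j * (α * g (j+1) - Beta γ j * g j)
        = (∑ j ∈ Finset.range (m+3), α * bin p (m+2) j * g (j+1))
          - ∑ j ∈ Finset.range (m+3), Beta γ j * bin p (m+2) j * g j := by
      rw [← Finset.sum_sub_distrib]
      exact Finset.sum_congr rfl (fun j _ => by ring)
    have e2 : ∑ j ∈ Finset.range (m+3), nuf p α γ (m+2) j * g (j+1)
        = (∑ j ∈ Finset.range (m+3), α * bin p (m+2) j * g (j+1))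
          - ∑ j ∈ Finset.range (m+3), Beta γ (j+1) * bin p (m+2) (j+1) * g (j+1) := by
      rw [← Finset.sum_sub_distrib]
      exact Finset.sum_congr rfl (fun j _ => by unfold nuf; ring)
    rw [e1, e2, hswap]
  -- Step D : Abel summation
  have hVdef : ∀ k, Vf p α γ (m+2) k = ∑ i ∈ Finset.range (k+1), nuf p α γ (m+2) i :=
    fun k => rfl
  have hD : ∑ j ∈ Finset.range (m+3), nuf p α γ (m+2) j * g (j+1)
      = ∑ k ∈ Finset.range (m+2), Vf p α γ (m+2) k * (g (k+1) - g (k+2)) := by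
    have := abel (nuf p α γ (m+2)) g (m+2)
    rw [show m+3 = m+2+1 by omega, this, ← hVdef (m+2), V_total hαv hγv]
    simp [hVdef]
  -- Step F : bound
  have hF : |∑ k ∈ Finset.range (m+2), Vf p α γ (m+2) k * (g (k+1) - g (k+2))| ≤ 2*p^2 := by
    calc |∑ k ∈ Finset.range (m+2), Vf p α γ (m+2) k * (g (k+1) - g (k+2))|
        ≤ ∑ k ∈ Finset.range (m+2), |Vf p α γ (m+2) k * (g (k+1) - g (k+2))| :=
          Finset.abs_sum_le_sum_abs _ _
      _ ≤ ∑ k ∈ Finset.range (m+2), |Vf p α γ (m+2) k| * (1/α) := by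
          apply Finset.sum_le_sum
          intro k _
          rw [abs_mul]
          apply mul_le_mul_of_nonneg_left _ (abs_nonneg _)
          rw [abs_sub_comm]
          exact gdiff_bound hα hγ0 hq hsum htot hbal hχ k
      _ = (1/α) * ∑ k ∈ Finset.range (m+2), |Vf p α γ (m+2) k| := by
          rw [Finset.mul_sum]
          exact Finset.sum_congr rfl (fun k _ => by ring)
      _ ≤ (1/α) * (2 * α * p^2) := by
          apply mul_le_mul_of_nonneg_left
            (V_abs_sum hαv hγv hp0.le (by linarith) hα.le) (by positivity)
      _ = 2*p^2 := by field_simp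
  rw [← hA] at *
  calc |∑ j ∈ Finset.range (m+3), bin p (m+2) j * (χ j - QA)|
      = |∑ k ∈ Finset.range (m+2), Vf p α γ (m+2) k * (g (k+1) - g (k+2))| := by
        rw [hB, hC, hD]
    _ ≤ 2*p^2 := hF


lemma map_apply_toReal {Ω'' : Type*} [MeasurableSpace Ω''] (μ : Measure Ω'')
    [IsProbabilityMeasure μ] (X : Ω'' → ℕ) (hX : Measurable X) (B : Set ℤ) :
    ((Measure.map (fun ω => (X ω : ℤ)) μ) B).toReal
      = ∑' j : ℕ, Set.indicator {j : ℕ | (j:ℤ) ∈ B}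
          (fun j => (μ {ω | X ω = j}).toReal) j := by
  classical
  have hmeas : Measurable (fun ω => (X ω : ℤ)) := Measurable.comp .of_discrete hX
  have hB : MeasurableSet B := .of_discrete
  rw [Measure.map_apply hmeas hB]
  have hpre : (fun ω => (X ω : ℤ)) ⁻¹' B = ⋃ j ∈ {j : ℕ | (j:ℤ) ∈ B}, {ω | X ω = j} := by
    ext ω
    simp only [Set.mem_preimage, Set.mem_iUnion, Set.mem_setOf_eq]
    constructor
    · intro h
      exact ⟨X ω, h, rfl⟩
    · rintro ⟨j, hj, hXj⟩
      rw [hXj]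
      exact hj
  have hmb := measure_biUnion (μ := μ) (f := fun j : ℕ => {ω | X ω = j})
    (Set.to_countable {j : ℕ | (j:ℤ) ∈ B})
    (fun i _ j _ hij => by
      rw [Function.onFun, Set.disjoint_left]
      rintro ω hi hj
      exact hij (by rw [← hi, ← hj]))
    (fun j _ => hX (measurableSet_singleton j))
  rw [hpre, hmb]
  rw [ENNReal.tsum_toReal_eq (fun _ => measure_ne_top _ _)]
  exact tsum_subtype {j : ℕ | (j:ℤ) ∈ B} (fun j => (μ {ω | X ω = j}).toReal)


end Stmt7Aux

open Stmt7Aux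

/-- Total variation distance between two laws on `ℤ`. -/
noncomputable def dTV (μ ν : Measure ℤ) : ℝ :=
  ⨆ B : Set ℤ, |(μ B).toReal - (ν B).toReal|

/-- Corollary 5 of Daly, Lefèvre, Utev: polynomial birth–death approximation of
the binomial distribution `Bin(n, p)` by `π ∼ PBD(α, γj + j(j-1))` with
`α = n(n-1)p(1-p)` and `γ = (n-1)(1-2p)`. -/
theorem stmt7
    {Ω Ω' : Type*} [MeasurableSpace Ω] [MeasurableSpace Ω']
    (P : Measure Ω) [IsProbabilityMeasure P]
    (P' : Measure Ω') [IsProbabilityMeasure P']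
    (n : ℕ) (hn : 2 ≤ n) (p : ℝ) (hp0 : 0 < p) (hp1 : p < 1 / 2)
    (W : Ω → ℕ) (hW : Measurable W)
    (hWpmf : ∀ j : ℕ, j ≤ n → (P {ω | W ω = j}).toReal =
      (Nat.choose n j : ℝ) * p ^ j * (1 - p) ^ (n - j))
    (αr γ : ℝ) (hαr : αr = n * (n - 1) * p * (1 - p)) (hγ : γ = (n - 1) * (1 - 2 * p))
    (π : Ω' → ℕ) (hπ : Measurable π) (c : ℝ) (hc : 0 < c)
    (hπpmf : ∀ j : ℕ, (P' {ω | π ω = j}).toReal =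
      c * αr ^ j / ((Nat.factorial j : ℝ) * ∏ k ∈ Finset.Icc 1 j, (γ + k - 1))) :
    dTV (Measure.map (fun ω => (W ω : ℤ)) P) (Measure.map (fun ω => (π ω : ℤ)) P') ≤
      2 * p ^ 2 := by
  classical
  obtain ⟨m, rfl⟩ : ∃ m, n = m + 2 := ⟨n - 2, by omega⟩
  have h1p : 0 < 1 - p := by linarith
  have hαv : αr = ((m:ℝ)+2)*((m:ℝ)+1)*p*(1-p) := by rw [hαr]; push_cast; ring
  have hγv : γ = ((m:ℝ)+1)*(1-2*p) := by rw [hγ]; push_cast; ring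
  have hα0 : 0 < αr := by
    rw [hαv]
    have h2 : (0:ℝ) < (m:ℝ)+2 := by positivity
    have h3 : (0:ℝ) < (m:ℝ)+1 := by positivity
    positivity
  have hγ0 : 0 < γ := by
    rw [hγv]
    have h3 : (0:ℝ) < (m:ℝ)+1 := by positivity
    nlinarith
  -- the pmf of π
  set q : ℕ → ℝ := fun j => (P' {ω | π ω = j}).toReal with hqdef
  have hprod_pos : ∀ j : ℕ, 0 < ∏ k ∈ Finset.Icc 1 j, (γ + (k:ℝ) - 1) := by
    intro j
    apply Finset.prod_pos
    intro k hk
    have hk1 : 1 ≤ k := (Finset.mem_Icc.1 hk).1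
    have : (1:ℝ) ≤ (k:ℝ) := by exact_mod_cast hk1
    linarith
  have hqpos : ∀ j, 0 < q j := by
    intro j
    rw [hqdef]
    simp only
    rw [hπpmf j]
    have h1 : (0:ℝ) < (Nat.factorial j : ℝ) := by
      exact_mod_cast Nat.factorial_pos j
    have h2 := hprod_pos j
    positivity
  have hbal : ∀ j, αr * q j = Beta γ (j+1) * q (j+1) := by
    intro j
    rw [hqdef]
    simp only
    rw [hπpmf j, hπpmf (j+1)]
    have hPs : ∏ k ∈ Finset.Icc 1 (j+1), (γ + (k:ℝ) - 1)
        = (∏ k ∈ Finset.Icc 1 j, (γ + (k:ℝ) - 1)) * (γ + (j:ℝ)) := by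
      rw [Finset.prod_Icc_succ_top (by omega : 1 ≤ j+1)]
      push_cast
      ring
    have hfs : ((j+1).factorial : ℝ) = ((j:ℝ)+1) * (j.factorial : ℝ) := by
      rw [Nat.factorial_succ]
      push_cast
      ring
    have h1 : ((j.factorial : ℕ) : ℝ) ≠ 0 := by
      exact_mod_cast (Nat.factorial_pos j).ne'
    have h2 : (∏ k ∈ Finset.Icc 1 j, (γ + (k:ℝ) - 1)) ≠ 0 := (hprod_pos j).ne'
    have h3 : γ + (j:ℝ) ≠ 0 := by positivity
    unfold Beta
    rw [hPs, hfs]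
    push_cast
    field_simp
    ring
  -- summability and total mass of q
  have hSmeas : ∀ j : ℕ, MeasurableSet {ω | π ω = j} := by
    intro j
    exact hπ (measurableSet_singleton j)
  have hSdisj : Pairwise (Function.onFun Disjoint (fun j => {ω | π ω = j})) := by
    intro i j hij
    simp only [Function.onFun]
    rw [Set.disjoint_left]
    rintro ω hi hj
    exact hij (by rw [← hi, ← hj])
  have hScover : (⋃ j : ℕ, {ω | π ω = j}) = Set.univ := by
    ext ω
    simp only [Set.mem_iUnion, Set.mem_univ, iff_true]
    exact ⟨π ω, rfl⟩
  have htsum1 : ∑' j : ℕ, P' {ω | π ω = j} = 1 := by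
    rw [← measure_iUnion hSdisj hSmeas, hScover, measure_univ]
  have hqne : ∀ j : ℕ, P' {ω | π ω = j} ≠ ⊤ := fun j => measure_ne_top _ _
  have htot : ∑' j, q j = 1 := by
    rw [hqdef]
    simp only
    rw [← ENNReal.tsum_toReal_eq hqne, htsum1]
    simp
  have hsum : Summable q := by
    apply ENNReal.summable_toReal
    rw [htsum1]
    exact ENNReal.one_ne_top
  -- the pmf of W vanishes beyond n
  have hWmeas : ∀ j : ℕ, MeasurableSet {ω | W ω = j} := fun j => hW (measurableSet_singleton j)
  have hWbig : P (⋃ j ∈ Finset.range (m+3), {ω | W ω = j}) = 1 := by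
    have hd : Set.PairwiseDisjoint (Finset.range (m+3) : Set ℕ) (fun j => {ω | W ω = j}) := by
      intro i _ j _ hij
      rw [Function.onFun, Set.disjoint_left]
      rintro ω hi hj
      exact hij (by rw [← hi, ← hj])
    have hb := measure_biUnion_finset (μ := P) hd (fun j _ => hWmeas j)
    have hto : (P (⋃ j ∈ Finset.range (m+3), {ω | W ω = j})).toReal = 1 := by
      rw [hb, ENNReal.toReal_sum (fun j _ => measure_ne_top _ _)]
      have he : ∀ j ∈ Finset.range (m+3), (P {ω | W ω = j}).toReal = bin p (m+2) j := by
        intro j hj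
        rw [hWpmf j (by simp at hj; omega)]
        rfl
      rw [Finset.sum_congr rfl he]
      exact bin_total (m+2)
    have hne : P (⋃ j ∈ Finset.range (m+3), {ω | W ω = j}) ≠ ⊤ := measure_ne_top _ _
    rw [← ENNReal.ofReal_toReal hne, hto]
    simp
  have hWzero : ∀ j : ℕ, m+2 < j → P {ω | W ω = j} = 0 := by
    intro j hj
    have hsub : {ω | W ω = j} ⊆ (⋃ i ∈ Finset.range (m+3), {ω | W ω = i})ᶜ := by
      intro ω hω
      simp only [Set.mem_compl_iff, Set.mem_iUnion, Finset.mem_range]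
      push_neg
      intro i hi
      have hWj : W ω = j := hω
      simp only [Set.mem_setOf_eq, hWj]
      omega
    have hc0 : P (⋃ i ∈ Finset.range (m+3), {ω | W ω = i})ᶜ = 0 := by
      rw [measure_compl (Finset.measurableSet_biUnion _ (fun j _ => hWmeas j))
        (measure_ne_top _ _), hWbig, measure_univ]
      simp
    exact le_antisymm (hc0 ▸ measure_mono hsub) zero_le
  -- per-B bound
  have hper : ∀ B : Set ℤ,
      |((Measure.map (fun ω => (W ω : ℤ)) P) B).toReal
        - ((Measure.map (fun ω => (π ω : ℤ)) P') B).toReal| ≤ 2 * p ^ 2 := by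
    intro B
    set χ : ℕ → ℝ := Set.indicator {j : ℕ | (j:ℤ) ∈ B} (fun _ => (1:ℝ)) with hχdef
    have hχind : ∀ (f : ℕ → ℝ) (j : ℕ),
        Set.indicator {j : ℕ | (j:ℤ) ∈ B} f j = χ j * f j := by
      intro f j
      rw [hχdef, Set.indicator_apply, Set.indicator_apply]
      by_cases h : j ∈ {j : ℕ | (j:ℤ) ∈ B}
      · simp [h]
      · simp [h]
    have hχ : ∀ j, χ j = 0 ∨ χ j = 1 := by
      intro j
      rw [hχdef, Set.indicator_apply]
      by_cases h : j ∈ {j : ℕ | (j:ℤ) ∈ B}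
      · right; simp [h]
      · left; simp [h]
    have hmapW : ((Measure.map (fun ω => (W ω : ℤ)) P) B).toReal
        = ∑' j : ℕ, χ j * (P {ω | W ω = j}).toReal := by
      rw [map_apply_toReal P W hW B]
      exact tsum_congr (fun j => hχind _ j)
    have hmapπ : ((Measure.map (fun ω => (π ω : ℤ)) P') B).toReal
        = ∑' j : ℕ, χ j * q j := by
      rw [map_apply_toReal P' π hπ B]
      exact tsum_congr (fun j => hχind _ j)
    have hfin : ∑' j : ℕ, χ j * (P {ω | W ω = j}).toReal
        = ∑ j ∈ Finset.range (m+3), χ j * bin p (m+2) j := by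
      rw [tsum_eq_sum (s := Finset.range (m+3))]
      · apply Finset.sum_congr rfl
        intro j hj
        rw [hWpmf j (by simp at hj; omega)]
        rfl
      · intro j hj
        rw [hWzero j (by simp at hj; omega)]
        simp
    rw [hmapW, hmapπ, hfin]
    exact core m p αr γ hp0 hp1 hαv hγv q χ hqpos hsum htot hbal hχ
  apply Real.iSup_le hper (by positivity)
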